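/- Let G be a finitely generated group and let Λ and Σ be finitely generated subgroups of G. Let X be a non-trivial Λ-almost invariant subset of G and Y a non-trivial Σ-almost invariant subset of G. Then the set of double cosets ΣgΛ (g ∈ G) such that gX crosses Y is finite. -/

import Mathlib

/-!
Statement 2: if $G$, $Λ$, $Σ$ are finitely generated, $X$ a non-trivial $Λ$-almost
invariant subset and $Y$ a non-trivial $Σ$-almost invariant subset, then the set of
double cosets $ΣgΛ$ such that $gX$ crosses $Y$ is finite.
-/

open scoped Pointwise symmDiff

/-- The image of a subset `X ⊆ G` in the set `H\G` of right cosets `Hg`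
(the quotient of `G` by the left multiplication action of `H`). -/
def rproj {G : Type*} [Group G] (H : Subgroup G) (X : Set G) :
    Set (Quotient (QuotientGroup.rightRel H)) :=
  Quotient.mk (QuotientGroup.rightRel H) '' X

/-- Two sets are almost equal if their symmetric difference is finite. -/
def AlmostEqSets {α : Type*} (A B : Set α) : Prop :=
  (A ∆ B).Finite

/-- `X ⊆ G` is `H`-almost invariant: `hX = X` for all `h ∈ H`, and for every `g ∈ G`
the sets `(H\X)g` and `H\X` are almost equal. -/
def IsAlmostInvariant {G : Type*} [Group G] (H : Subgroup G) (X : Set G) : Prop :=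
  (∀ h ∈ H, h • X = X) ∧
    ∀ g : G, AlmostEqSets (rproj H ((fun x => x * g) '' X)) (rproj H X)

/-- `X` is a non-trivial `H`-almost invariant subset of `G`:
in addition `H\X` and `H\Xᶜ` are both infinite. -/
def IsNontrivialAlmostInvariant {G : Type*} [Group G] (H : Subgroup G) (X : Set G) : Prop :=
  IsAlmostInvariant H X ∧ (rproj H X).Infinite ∧ (rproj H Xᶜ).Infinite

/-- `X` crosses `Y`, where `Y` is `K`-almost invariant: each of the four sets
`X ∩ Y`, `Xᶜ ∩ Y`, `X ∩ Yᶜ`, `Xᶜ ∩ Yᶜ` projects to an infinite subset of `K\G`. -/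
def Crosses {G : Type*} [Group G] (K : Subgroup G) (X Y : Set G) : Prop :=
  (rproj K (X ∩ Y)).Infinite ∧ (rproj K (Xᶜ ∩ Y)).Infinite ∧
    (rproj K (X ∩ Yᶜ)).Infinite ∧ (rproj K (Xᶜ ∩ Yᶜ)).Infinite

/-! ### Auxiliary material

We work with the "Cayley graph" of `G` given by a finite symmetric generating set `S`:
two elements `x`, `x * s` (for `s ∈ S`) are adjacent.  The key notions are the
`S`-boundary of a set and reachability/connectedness within a subset. -/

section Aux

variable {G : Type*} [Group G]

/-- The `S`-boundary of a set `W`: points having a neighbour on the other side. -/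
def SBd (S W : Set G) : Set G :=
  {x | ∃ s ∈ S, (x ∈ W ∧ x * s ∉ W) ∨ (x ∉ W ∧ x * s ∈ W)}

lemma SBd_compl (S W : Set G) : SBd S Wᶜ = SBd S W := by
  ext x
  simp only [SBd, Set.mem_setOf_eq, Set.mem_compl_iff, not_not]
  constructor <;> (rintro ⟨s, hs, h⟩; exact ⟨s, hs, h.symm⟩)

lemma SBd_smul (S : Set G) (g : G) (W : Set G) : SBd S (g • W) = g • SBd S W := by
  ext x
  simp only [SBd, Set.mem_setOf_eq, Set.mem_smul_set_iff_inv_smul_mem, smul_eq_mul, mul_assoc]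

lemma not_mem_SBd_iff {S W : Set G} {x : G} (h : x ∉ SBd S W) {s : G} (hs : s ∈ S) :
    x ∈ W ↔ x * s ∈ W := by
  simp only [SBd, Set.mem_setOf_eq, not_exists] at h
  have := h s
  tauto

/-- Reachability within `C` by right multiplication by elements of `S`. -/
def ReachIn (S C : Set G) : G → G → Prop :=
  Relation.ReflTransGen (fun u v => v ∈ C ∧ ∃ s ∈ S, v = u * s)

lemma ReachIn.trans {S C : Set G} {a b c : G} (h : ReachIn S C a b) (h' : ReachIn S C b c) :
    ReachIn S C a c := Relation.ReflTransGen.trans h h'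

lemma ReachIn.mono {S C C' : Set G} (hC : C ⊆ C') {a b : G} (h : ReachIn S C a b) :
    ReachIn S C' a b := by
  induction h with
  | refl => exact .refl
  | tail _ h2 ih => exact ih.tail ⟨hC h2.1, h2.2⟩

lemma ReachIn.smul {S C : Set G} (g : G) {a b : G} (h : ReachIn S C a b) :
    ReachIn S (g • C) (g * a) (g * b) := by
  induction h with
  | refl => exact .refl
  | tail _ h2 ih =>
    obtain ⟨hc, s, hs, rfl⟩ := h2
    exact ih.tail ⟨by simpa [smul_eq_mul] using Set.smul_mem_smul_set (a := g) hc,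
      s, hs, (mul_assoc _ _ _).symm⟩

lemma ReachIn.mem_iff {S C W : Set G} (hd : ∀ x ∈ C, x ∉ SBd S W) {a b : G} (ha : a ∈ C)
    (h : ReachIn S C a b) : b ∈ C ∧ (a ∈ W ↔ b ∈ W) := by
  induction h with
  | refl => exact ⟨ha, Iff.rfl⟩
  | tail _ h2 ih =>
    obtain ⟨hc, s, hs, rfl⟩ := h2
    exact ⟨hc, ih.2.trans (not_mem_SBd_iff (hd _ ih.1) hs)⟩

/-- Pointed connectedness of a set `C` (with basepoint `x₀`). -/
def PConnW (S C : Set G) (x₀ : G) : Prop := x₀ ∈ C ∧ ∀ x ∈ C, ReachIn S C x₀ x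

lemma PConnW.smul {S C : Set G} {x₀ : G} (g : G) (h : PConnW S C x₀) :
    PConnW S (g • C) (g * x₀) := by
  refine ⟨by simpa [smul_eq_mul] using Set.smul_mem_smul_set (a := g) h.1, ?_⟩
  rintro x ⟨c, hc, rfl⟩
  simpa [smul_eq_mul] using (h.2 c hc).smul g

/-- A connected set avoiding the boundary of `W` lies on one side of `W`. -/
lemma PConnW.subset_or {S C W : Set G} {x₀ : G} (h : PConnW S C x₀)
    (hd : ∀ x ∈ C, x ∉ SBd S W) : C ⊆ W ∨ C ⊆ Wᶜ := by
  by_cases h0 : x₀ ∈ W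
  · exact Or.inl fun x hx => ((ReachIn.mem_iff hd h.1 (h.2 x hx)).2).mp h0
  · exact Or.inr fun x hx hxW => h0 (((ReachIn.mem_iff hd h.1 (h.2 x hx)).2).mpr hxW)

lemma closed_of_gen {S A : Set G} (hgen : ∀ g : G, g ∈ Submonoid.closure S)
    (hA : ∀ x ∈ A, ∀ s ∈ S, x * s ∈ A) {x : G} (hx : x ∈ A) : ∀ y : G, y ∈ A := by
  have key : ∀ z ∈ Submonoid.closure S, ∀ w ∈ A, w * z ∈ A := by
    intro z hz
    induction hz using Submonoid.closure_induction with
    | mem t ht => exact fun w hw => hA w hw t ht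
    | one => exact fun w hw => by simpa using hw
    | mul a b _ _ iha ihb => exact fun w hw => by rw [← mul_assoc]; exact ihb _ (iha w hw)
  intro y
  have := key (x⁻¹ * y) (hgen _) x hx
  simpa using this

/-- If the boundary of `U` is inside `V` and vice versa, and `U` is nonempty, then the
corner `Uᶜ ∩ Vᶜ` is empty (it has no outgoing edges, and the graph is connected). -/
lemma corner_empty {S : Set G} (hgen : ∀ g : G, g ∈ Submonoid.closure S) {U V : Set G}
    (hU : SBd S U ⊆ V) (hV : SBd S V ⊆ U) (hne : U.Nonempty) : Uᶜ ∩ Vᶜ = ∅ := by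
  rw [Set.eq_empty_iff_forall_notMem]
  intro x hx
  have hclosed : ∀ z ∈ Uᶜ ∩ Vᶜ, ∀ s ∈ S, z * s ∈ Uᶜ ∩ Vᶜ := by
    rintro z ⟨hzU, hzV⟩ s hs
    constructor
    · intro hzs
      exact hzV (hU ⟨s, hs, Or.inr ⟨hzU, hzs⟩⟩)
    · intro hzs
      exact hzU (hV ⟨s, hs, Or.inr ⟨hzV, hzs⟩⟩)
  obtain ⟨u, hu⟩ := hne
  exact (closed_of_gen hgen hclosed hx u).1 hu

lemma reachIn_of_list {S C : Set G} {x : G} (l : List G) (hl : ∀ s ∈ l, s ∈ S)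
    (hC : ∀ i, i ≤ l.length → x * (l.take i).prod ∈ C) :
    ReachIn S C x (x * l.prod) := by
  have key : ∀ i, i ≤ l.length → ReachIn S C x (x * (l.take i).prod) := by
    intro i
    induction i with
    | zero => intro _; simp only [List.take_zero, List.prod_nil, mul_one]; exact Relation.ReflTransGen.refl
    | succ n ih =>
      intro hn
      have hlt : n < l.length := hn
      refine (ih hlt.le).tail ⟨hC (n + 1) hn, l[n], hl _ (l.getElem_mem hlt), ?_⟩
      rw [List.prod_take_succ l n hlt, mul_assoc]
  have := key l.length le_rfl
  simpa using this

/-- Any finite subset `F` can be enlarged to a finite set `D` such that `H * D` is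
connected, provided `H` is finitely generated and `S` generates `G`. -/
lemma exists_thick (S : Set G) (hgenm : ∀ g : G, g ∈ Submonoid.closure S)
    (H : Subgroup G) (hH : H.FG) {F : Set G} (hF : F.Finite) :
    ∃ D : Set G, D.Finite ∧ F ⊆ D ∧ PConnW S (↑H * D) 1 := by
  classical
  have hword : ∀ g : G, ∃ l : List G, (∀ s ∈ l, s ∈ S) ∧ l.prod = g := fun g =>
    Submonoid.exists_list_of_mem_closure (hgenm g)
  choose word hwS hwprod using hword
  obtain ⟨T₀, hT₀⟩ := hH
  set T : Set G := ↑T₀ ∪ (↑T₀)⁻¹ with hT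
  have hTfin : T.Finite := T₀.finite_toSet.union T₀.finite_toSet.inv
  have hTH : T ⊆ (H : Set G) := by
    rintro t (ht | ht)
    · exact hT₀ ▸ Subgroup.subset_closure ht
    · have : t⁻¹ ∈ (↑T₀ : Set G) := Set.mem_inv.mp ht
      have := hT₀ ▸ Subgroup.subset_closure this
      simpa using (Subgroup.inv_mem _ this)
  set pre : G → Set G := fun e => (fun i => ((word e).take i).prod) '' Set.Iic (word e).length
    with hpre
  have hprefin : ∀ e, (pre e).Finite := fun e => (Set.finite_Iic _).image _
  set D : Set G := {1} ∪ ⋃ e ∈ F ∪ T, pre e with hD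
  have hDfin : D.Finite :=
    (Set.finite_singleton 1).union ((hF.union hTfin).biUnion fun e _ => hprefin e)
  have hmemD : ∀ e ∈ F ∪ T, ∀ d ∈ pre e, d ∈ D :=
    fun e he d hd => Set.mem_union_right _ (Set.mem_biUnion he hd)
  have hself : ∀ e, e ∈ pre e := fun e =>
    ⟨(word e).length, Set.mem_Iic.2 le_rfl, by simp [List.take_length, hwprod]⟩
  have hFD : F ⊆ D := fun e he => hmemD e (Or.inl he) e (hself e)
  have h1D : (1 : G) ∈ D := Set.mem_union_left _ rfl
  have h1 : (1 : G) ∈ (↑H * D : Set G) := ⟨1, H.one_mem, 1, h1D, mul_one 1⟩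
  have hstep : ∀ h ∈ H, ∀ e ∈ F ∪ T, ∀ d ∈ pre e, ReachIn S (↑H * D) h (h * d) := by
    rintro h hh e he d ⟨i, hi, rfl⟩
    set l : List G := (word e).take i with hl
    have : ReachIn S (↑H * D : Set G) h (h * l.prod) := by
      refine reachIn_of_list l (fun s hs => hwS e s (List.mem_of_mem_take hs)) ?_
      intro j hj
      have hjl : j ≤ min i (word e).length := by
        have := hj
        rw [hl, List.length_take] at this
        exact this
      have htt : (l.take j).prod = ((word e).take (min j i)).prod := by
        rw [hl, List.take_take]
      refine ⟨h, hh, (l.take j).prod, ?_, rfl⟩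
      refine hmemD e he _ ?_
      rw [htt]
      exact ⟨min j i, Set.mem_Iic.2 (by omega), rfl⟩
    simpa using this
  have hreachH : ∀ h ∈ Submonoid.closure T, ReachIn S (↑H * D) 1 h := by
    intro h hh
    induction hh using Submonoid.closure_induction with
    | mem t ht =>
      have := hstep 1 H.one_mem t (Or.inr ht) t (hself t)
      rwa [one_mul] at this
    | one => exact .refl
    | mul a b ha hb iha ihb =>
      have haH : a ∈ H := by
        have : Submonoid.closure T ≤ H.toSubmonoid := Submonoid.closure_le.2 hTH
        exact this ha
      refine iha.trans ?_
      have := (ihb.smul a).mono (C' := (↑H * D : Set G)) ?_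
      · rwa [mul_one] at this
      · rintro z ⟨w, ⟨h', hh', d, hd, rfl⟩, rfl⟩
        exact ⟨a * h', H.mul_mem haH hh', d, hd, by simp [smul_eq_mul, mul_assoc]⟩
  have hclos : ∀ h ∈ H, ReachIn S (↑H * D) 1 h := by
    intro h hh
    apply hreachH
    have : h ∈ (Subgroup.closure (↑T₀ : Set G)).toSubmonoid := by rw [hT₀]; simpa using hh
    rwa [Subgroup.closure_toSubmonoid] at this
  refine ⟨D, hDfin, hFD, h1, ?_⟩
  rintro x ⟨h, hh, d, hd, rfl⟩
  rcases hd with hd | hd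
  · rcases hd with rfl
    simpa using hclos h hh
  · simp only [Set.mem_iUnion, exists_prop] at hd
    obtain ⟨e, he, hde⟩ := hd
    exact (hclos h hh).trans (hstep h hh e he d hde)

lemma inv_of_smul {H : Subgroup G} {A : Set G} (h : ∀ g ∈ H, g • A = A) :
    ∀ g ∈ H, ∀ z : G, g * z ∈ A ↔ z ∈ A := by
  intro g hg z
  conv_lhs => rw [← h g hg]
  rw [← smul_eq_mul]
  exact Set.smul_mem_smul_set_iff

lemma mem_rproj_iff {H : Subgroup G} {A : Set G}
    (hA : ∀ g ∈ H, ∀ z : G, g * z ∈ A ↔ z ∈ A) (x : G) :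
    Quotient.mk (QuotientGroup.rightRel H) x ∈ rproj H A ↔ x ∈ A := by
  constructor
  · rintro ⟨a, ha, hax⟩
    have hrel : x * a⁻¹ ∈ H := QuotientGroup.rightRel_apply.mp (Quotient.exact hax)
    have := (hA _ hrel a).mpr ha
    rwa [inv_mul_cancel_right] at this
  · intro hx
    exact ⟨x, hx, rfl⟩

lemma rproj_nonempty_of_infinite {H : Subgroup G} {A : Set G}
    (h : (rproj H A).Infinite) : A.Nonempty := by
  obtain ⟨q, hq⟩ := h.nonempty
  obtain ⟨a, ha, _⟩ := hq
  exact ⟨a, ha⟩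

lemma mem_pre {A : Set G} {s x : G} : x ∈ (fun y => y * s⁻¹) '' A ↔ x * s ∈ A := by
  constructor
  · rintro ⟨a, ha, rfl⟩
    simpa using ha
  · intro h
    exact ⟨x * s, h, by simp⟩

/-- The boundary of an `H`-almost invariant set lies in finitely many cosets. -/
lemma rproj_SBd_finite {H : Subgroup G} {A S : Set G} (hS : S.Finite)
    (hai : IsAlmostInvariant H A) : (rproj H (SBd S A)).Finite := by
  have hAinv := inv_of_smul hai.1
  have hpreinv : ∀ s : G, ∀ g ∈ H, ∀ z : G,
      g * z ∈ (fun y => y * s⁻¹) '' A ↔ z ∈ (fun y => y * s⁻¹) '' A := by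
    intro s g hg z
    rw [mem_pre, mem_pre, mul_assoc]
    exact hAinv g hg (z * s)
  have hsub : rproj H (SBd S A) ⊆
      ⋃ s ∈ S, (rproj H ((fun y => y * s⁻¹) '' A) ∆ rproj H A) := by
    rintro q ⟨x, hx, rfl⟩
    obtain ⟨s, hs, hcase⟩ := hx
    refine Set.mem_biUnion hs ?_
    have hm1 := mem_rproj_iff hAinv x
    have hm2 := mem_rproj_iff (hpreinv s) x
    rw [Set.mem_symmDiff]
    rcases hcase with ⟨h1, h2⟩ | ⟨h1, h2⟩
    · exact Or.inr ⟨hm1.mpr h1, fun hmem => h2 (mem_pre.mp (hm2.mp hmem))⟩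
    · exact Or.inl ⟨hm2.mpr (mem_pre.mpr h2), fun hmem => h1 (hm1.mp hmem)⟩
  exact (hS.biUnion fun s _ => hai.2 s⁻¹).subset hsub

lemma subset_mul_of_rproj_finite {H : Subgroup G} {A : Set G}
    (h : (rproj H A).Finite) : ∃ D₀ : Set G, D₀.Finite ∧ A ⊆ ↑H * D₀ := by
  refine ⟨Quotient.out '' rproj H A, h.image _, ?_⟩
  intro x hx
  set q := Quotient.mk (QuotientGroup.rightRel H) x with hq
  have hqmem : q ∈ rproj H A := ⟨x, hx, rfl⟩
  have houtq : Quotient.mk (QuotientGroup.rightRel H) q.out = q := Quotient.out_eq q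
  have hrel : x * q.out⁻¹ ∈ H :=
    QuotientGroup.rightRel_apply.mp (Quotient.exact (houtq.trans hq))
  exact ⟨x * q.out⁻¹, hrel, q.out, ⟨q, hqmem, rfl⟩, by simp⟩

end Aux

theorem finitely_many_crossing_double_cosets {G : Type*} [Group G] [Group.FG G]
    (L K : Subgroup G) (hL : L.FG) (hK : K.FG) (X Y : Set G)
    (hX : IsNontrivialAlmostInvariant L X) (hY : IsNontrivialAlmostInvariant K Y) :
    (DoubleCoset.mk K L '' {g : G | Crosses K (g • X) Y}).Finite := by
  classical
  obtain ⟨S₁, hS₁, hS₁fin⟩ := Group.fg_iff.mp ‹Group.FG G›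
  set S : Set G := S₁ ∪ S₁⁻¹ with hS
  have hSfin : S.Finite := hS₁fin.union hS₁fin.inv
  have hgenm : ∀ g : G, g ∈ Submonoid.closure S := by
    intro g
    have hg : g ∈ (Subgroup.closure S₁).toSubmonoid := by rw [hS₁]; simp
    rwa [Subgroup.closure_toSubmonoid] at hg
  have hbdXfin : (rproj L (SBd S X)).Finite := rproj_SBd_finite hSfin hX.1
  have hbdYfin : (rproj K (SBd S Y)).Finite := rproj_SBd_finite hSfin hY.1
  obtain ⟨D₀, hD₀fin, hbdX⟩ := subset_mul_of_rproj_finite hbdXfin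
  obtain ⟨B₀, hB₀fin, hbdY⟩ := subset_mul_of_rproj_finite hbdYfin
  obtain ⟨D, hDfin, hD₀D, hconnL⟩ := exists_thick S hgenm L hL hD₀fin
  obtain ⟨B, hBfin, hB₀B, hconnK⟩ := exists_thick S hgenm K hK hB₀fin
  have hbdX' : SBd S X ⊆ ↑L * D := hbdX.trans (Set.mul_subset_mul_left hD₀D)
  have hbdY' : SBd S Y ⊆ ↑K * B := hbdY.trans (Set.mul_subset_mul_left hB₀B)
  have hYne : Y.Nonempty := rproj_nonempty_of_infinite hY.2.1
  have hYcne : Yᶜ.Nonempty := rproj_nonempty_of_infinite hY.2.2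
  have hfin : ((fun p => DoubleCoset.mk K L p) '' (B * D⁻¹)).Finite := (hBfin.mul hDfin.inv).image _
  refine hfin.subset ?_
  rintro q ⟨g, hg, rfl⟩
  have hint : ((g • (↑L * D : Set G)) ∩ (↑K * B : Set G)).Nonempty := by
    by_contra hdisj
    rw [Set.not_nonempty_iff_eq_empty] at hdisj
    have hdisj' : ∀ x, x ∈ g • (↑L * D : Set G) → x ∉ (↑K * B : Set G) := by
      intro x h1 h2
      exact absurd (Set.mem_inter h1 h2) (by rw [hdisj]; exact Set.notMem_empty x)
    have hbgX : SBd S (g • X) ⊆ g • (↑L * D : Set G) := by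
      rw [SBd_smul]
      exact Set.smul_set_mono hbdX'
    have hconnLD : PConnW S (g • (↑L * D : Set G)) (g * 1) := hconnL.smul g
    have hYside : g • (↑L * D : Set G) ⊆ Y ∨ g • (↑L * D : Set G) ⊆ Yᶜ :=
      hconnLD.subset_or fun x hx hmem => hdisj' x hx (hbdY' hmem)
    have hXside : (↑K * B : Set G) ⊆ g • X ∨ (↑K * B : Set G) ⊆ (g • X)ᶜ :=
      hconnK.subset_or fun x hx hmem => hdisj' x (hbgX hmem) hx
    obtain ⟨c1, c2, c3, c4⟩ := hg
    have n1 : ((g • X) ∩ Y).Nonempty := rproj_nonempty_of_infinite c1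
    have n2 : ((g • X)ᶜ ∩ Y).Nonempty := rproj_nonempty_of_infinite c2
    have n3 : ((g • X) ∩ Yᶜ).Nonempty := rproj_nonempty_of_infinite c3
    have n4 : ((g • X)ᶜ ∩ Yᶜ).Nonempty := rproj_nonempty_of_infinite c4
    rcases hYside with hYa | hYb <;> rcases hXside with hXa | hXb
    · have hemp := corner_empty hgenm (U := Y) (V := g • X)
        (hbdY'.trans hXa) (hbgX.trans hYa) hYne
      obtain ⟨z, hz1, hz2⟩ := n4
      exact (Set.eq_empty_iff_forall_notMem.mp hemp z) ⟨hz2, hz1⟩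
    · have hemp := corner_empty hgenm (U := Y) (V := (g • X)ᶜ)
        (hbdY'.trans hXb) (by rw [SBd_compl]; exact hbgX.trans hYa) hYne
      rw [compl_compl] at hemp
      obtain ⟨z, hz1, hz2⟩ := n3
      exact (Set.eq_empty_iff_forall_notMem.mp hemp z) ⟨hz2, hz1⟩
    · have hemp := corner_empty hgenm (U := Yᶜ) (V := g • X)
        (by rw [SBd_compl]; exact hbdY'.trans hXa) (hbgX.trans hYb) hYcne
      rw [compl_compl] at hemp
      obtain ⟨z, hz1, hz2⟩ := n2
      exact (Set.eq_empty_iff_forall_notMem.mp hemp z) ⟨hz2, hz1⟩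
    · have hemp := corner_empty hgenm (U := Yᶜ) (V := (g • X)ᶜ)
        (by rw [SBd_compl]; exact hbdY'.trans hXb)
        (by rw [SBd_compl]; exact hbgX.trans hYb) hYcne
      rw [compl_compl, compl_compl] at hemp
      obtain ⟨z, hz1, hz2⟩ := n1
      exact (Set.eq_empty_iff_forall_notMem.mp hemp z) ⟨hz2, hz1⟩
  obtain ⟨x, hx1, hx2⟩ := hint
  obtain ⟨w, hw, rfl⟩ := hx1
  obtain ⟨l, hl, d, hd, rfl⟩ := hw
  obtain ⟨k, hk, b, hb, hkb⟩ := hx2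
  have hkb' : k * b = g * (l * d) := by simpa [smul_eq_mul] using hkb
  have hg' : g = k * (b * d⁻¹) * l⁻¹ := by
    have hgeq : g = (k * b) * (l * d)⁻¹ := by rw [hkb']; group
    rw [hgeq]; group
  refine ⟨b * d⁻¹, Set.mul_mem_mul hb (Set.inv_mem_inv.mpr hd), ?_⟩
  exact ((DoubleCoset.eq K L (b * d⁻¹) g).mpr ⟨k, hk, l⁻¹, L.inv_mem hl, hg'⟩)
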